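/- Let m > 0 and let t̃ : (0, ∞) → ℝ be a differentiable function satisfying |t̃'(r)| < r/(r + 2m) for every r > 0, and let L := lim_{r → 0⁺} t̃(r). Then for every c > L and every r > 0 one has t̃(r) < c + r − 2m·log(1 + r/(2m)); i.e., the graph {(t̃(r), r) : r > 0} is disjoint from every radial null curve {(c + r − 2m·log(1 + r/(2m)), r) : r > 0} with c > L, so some radially outgoing null geodesic emanating from r = 0 never intersects the putative Cauchy surface. -/

import Mathlib

open Real Filter Set

private lemma g_hasDeriv (m : ℝ) (hm : 0 < m) :
    ∀ x : ℝ, 0 < x → HasDerivAt (fun x : ℝ => x - 2 * m * Real.log (1 + x / (2 * m)))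
      (x / (x + 2 * m)) x := by
  intro x hx
  have h2m : (0:ℝ) < 2 * m := by linarith
  have hpos : 0 < 1 + x / (2 * m) := by positivity
  have hinner : HasDerivAt (fun x : ℝ => 1 + x / (2 * m)) (1 / (2 * m)) x := by
    simpa using ((hasDerivAt_id x).div_const (2 * m)).const_add 1
  have hlog : HasDerivAt (fun x : ℝ => Real.log (1 + x / (2 * m)))
      ((1 / (2 * m)) / (1 + x / (2 * m))) x := hinner.log (ne_of_gt hpos)
  have := (hasDerivAt_id x).sub ((hlog.const_mul (2 * m)))
  convert this using 1
  have hne : x + 2 * m ≠ 0 := by positivity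
  · rfl
  · rfl
  · rfl
  · field_simp
    ring

/-- Let `m > 0` and let `t̃ : (0, ∞) → ℝ` be a differentiable function satisfying
`|t̃'(r)| < r/(r + 2m)` for every `r > 0`, and let `L := lim_{r → 0⁺} t̃(r)`.
Then for every `c > L` and every `r > 0` one has
`t̃(r) < c + r − 2m·log(1 + r/(2m))`; i.e., the graph `{(t̃(r), r) : r > 0}` is
disjoint from every radial null curve `{(c + r − 2m·log(1 + r/(2m)), r) : r > 0}`
with `c > L`, so some radially outgoing null geodesic emanating from `r = 0` never
intersects the putative Cauchy surface. -/
theorem null_geodesic_misses_putative_cauchy_surface (m : ℝ) (hm : 0 < m)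
    (ttil ttil' : ℝ → ℝ) (L : ℝ)
    (hd : ∀ r : ℝ, 0 < r → HasDerivAt ttil (ttil' r) r)
    (hb : ∀ r : ℝ, 0 < r → |ttil' r| < r / (r + 2 * m))
    (hL : Filter.Tendsto ttil (nhdsWithin 0 (Set.Ioi 0)) (nhds L)) :
    ∀ c : ℝ, L < c → ∀ r : ℝ, 0 < r →
      ttil r < c + r - 2 * m * Real.log (1 + r / (2 * m)) := by
  intro c hc r hr
  set g : ℝ → ℝ := fun x => x - 2 * m * Real.log (1 + x / (2 * m)) with hg
  set h : ℝ → ℝ := fun x => g x - ttil x with hh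
  -- h is strictly monotone on Ioi 0
  have hderiv : ∀ x ∈ Set.Ioi (0:ℝ), HasDerivAt h (x / (x + 2 * m) - ttil' x) x := by
    intro x hx
    exact (g_hasDeriv m hm x hx).sub (hd x hx)
  have hmono : StrictMonoOn h (Set.Ioi 0) := by
    apply strictMonoOn_of_hasDerivWithinAt_pos (convex_Ioi 0)
    · exact fun x hx => ((hderiv x hx).continuousAt).continuousWithinAt
    · intro x hx
      rw [interior_Ioi] at hx
      exact ((hderiv x hx).hasDerivWithinAt)
    · intro x hx
      rw [interior_Ioi] at hx
      have := hb x hx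
      have := abs_lt.mp this
      linarith [this.2]
  -- limit of h at 0+
  have hg0 : Filter.Tendsto g (nhdsWithin 0 (Set.Ioi 0)) (nhds 0) := by
    have hcont : ContinuousAt g 0 := by
      have h1 : ContinuousAt (fun x : ℝ => 1 + x / (2 * m)) 0 := by fun_prop
      have h2 : (1 : ℝ) + 0 / (2 * m) ≠ 0 := by norm_num
      have : ContinuousAt (fun x : ℝ => Real.log (1 + x / (2 * m))) 0 :=
        (Real.continuousAt_log (by simpa using h2)).comp h1
      exact (continuousAt_id.sub ((continuousAt_const.mul this)))
    have : Filter.Tendsto g (nhdsWithin 0 (Set.Ioi 0)) (nhds (g 0)) :=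
      hcont.continuousWithinAt
    simpa [hg] using this
  have hh0 : Filter.Tendsto h (nhdsWithin 0 (Set.Ioi 0)) (nhds (0 - L)) :=
    hg0.sub hL
  -- h s < h r for s ∈ (0, r), so 0 - L ≤ h r in limit
  have hle : 0 - L ≤ h r := by
    apply le_of_tendsto hh0
    filter_upwards [Ioo_mem_nhdsGT_of_mem (by constructor <;> [rfl; exact hr] :
      (0:ℝ) ∈ Set.Ico 0 r)] with s hs
    exact le_of_lt (hmono hs.1 hr hs.2)
  have : ttil r ≤ L + g r := by
    simp only [hh] at hle; linarith
  have h2 : ttil r < c + g r := by linarith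
  simp only [hg] at h2
  linarith
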